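/- arXiv:1612.08490 — 3 statements merged into one kernel-verified Lean document; each statement's English description precedes it below -/
import Mathlib

section
/- Let L be a convex function on a Euclidean space M and θ₀ ∈ M. Suppose there exist κ, A > 0 such that for every subgradient h ∈ ∂L(θ₀) and every θ with ‖θ − θ₀‖₂ ≤ A, L(θ) ≥ L(θ₀) + ⟨h, θ − θ₀⟩ + (κ/2)‖θ − θ₀‖₂². If inf_{h ∈ ∂L(θ₀)} ‖h‖₂ < κA/2, then every global minimizer θ̂ of L satisfies ‖θ̂ − θ₀‖₂ ≤ (2/κ)·inf_{h ∈ ∂L(θ₀)} ‖h‖₂. -/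
open scoped RealInnerProductSpace

/-- Every finite convex function on a Euclidean space has a subgradient at every point. -/
lemma exists_subgradient_aux {n : ℕ} (L : EuclideanSpace ℝ (Fin n) → ℝ)
    (hL : ConvexOn ℝ Set.univ L) (θ₀ : EuclideanSpace ℝ (Fin n)) :
    ∃ h : EuclideanSpace ℝ (Fin n), ∀ θ, L θ₀ + ⟪h, θ - θ₀⟫ ≤ L θ := by
  have hcont : Continuous L := by
    rw [← continuousOn_univ]
    exact hL.continuousOn isOpen_univ
  set S : Set ((EuclideanSpace ℝ (Fin n)) × ℝ) := {p | L p.1 < p.2} with hS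
  have hSopen : IsOpen S := isOpen_lt (hcont.comp continuous_fst) continuous_snd
  have hSconv : Convex ℝ S := by
    rintro ⟨p1, p2⟩ hp ⟨q1, q2⟩ hq a b ha hb hab
    simp only [hS, Set.mem_setOf_eq] at hp hq ⊢
    have hcomb : L (a • p1 + b • q1) ≤ a * L p1 + b * L q1 :=
      hL.2 (Set.mem_univ p1) (Set.mem_univ q1) ha hb hab
    have h1 : a * L p1 ≤ a * p2 := mul_le_mul_of_nonneg_left hp.le ha
    have h2 : b * L q1 ≤ b * q2 := mul_le_mul_of_nonneg_left hq.le hb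
    rcases ha.lt_or_eq with ha' | ha'
    · have := mul_lt_mul_of_pos_left hp ha'
      simpa using lt_of_le_of_lt hcomb (by linarith)
    · have hb1 : b = 1 := by linarith
      have ha0 : a = 0 := ha'.symm
      subst hb1; subst ha0
      simpa using lt_of_le_of_lt hcomb (by linarith)
  have hx : (θ₀, L θ₀) ∉ S := by simp [hS]
  obtain ⟨f, hf⟩ := geometric_hahn_banach_open_point hSconv hSopen hx
  set c : ℝ := f (0, 1) with hc
  have hfsplit : ∀ (θ : EuclideanSpace ℝ (Fin n)) (t : ℝ), f (θ, t) = f (θ, 0) + t * c := by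
    intro θ t
    have hdecomp : (θ, t) = (θ, (0 : ℝ)) + t • ((0 : EuclideanSpace ℝ (Fin n)), (1 : ℝ)) := by
      simp [Prod.ext_iff]
    rw [hdecomp, map_add, map_smul, smul_eq_mul, hc]
  have hcneg : c < 0 := by
    have hmem : (θ₀, L θ₀ + 1) ∈ S := by simp [hS]
    have := hf _ hmem
    rw [hfsplit θ₀ (L θ₀ + 1), hfsplit θ₀ (L θ₀)] at this
    have hexp : (L θ₀ + 1) * c = L θ₀ * c + c := by ring
    linarith
  have key : ∀ θ, f (θ, 0) + L θ * c ≤ f (θ₀, 0) + L θ₀ * c := by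
    intro θ
    by_contra hcon
    push_neg at hcon
    set gap : ℝ := f (θ, 0) + L θ * c - (f (θ₀, 0) + L θ₀ * c) with hgap
    have hgappos : 0 < gap := by simp only [hgap]; linarith
    set ε : ℝ := gap / (-c) with hε
    have hεpos : 0 < ε := div_pos hgappos (by linarith)
    have hεc : ε * c = -gap := by
      rw [hε, div_neg, neg_mul, div_mul_cancel₀ _ hcneg.ne]
    have hmem : (θ, L θ + ε / 2) ∈ S := by
      simp only [hS, Set.mem_setOf_eq]
      linarith
    have := hf _ hmem
    rw [hfsplit θ (L θ + ε / 2), hfsplit θ₀ (L θ₀)] at this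
    have hexp : (L θ + ε / 2) * c = L θ * c + ε * c / 2 := by ring
    linarith
  set g : (EuclideanSpace ℝ (Fin n)) →L[ℝ] ℝ :=
    f.comp (ContinuousLinearMap.inl ℝ (EuclideanSpace ℝ (Fin n)) ℝ) with hg
  refine ⟨(InnerProductSpace.toDual ℝ _).symm ((-c)⁻¹ • g), fun θ => ?_⟩
  have hinner : ⟪(InnerProductSpace.toDual ℝ _).symm ((-c)⁻¹ • g), θ - θ₀⟫
      = (-c)⁻¹ * (f (θ, 0) - f (θ₀, 0)) := by
    rw [InnerProductSpace.toDual_symm_apply]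
    have : g (θ - θ₀) = f (θ, 0) - f (θ₀, 0) := by
      rw [hg]
      simp only [ContinuousLinearMap.comp_apply, ContinuousLinearMap.inl_apply]
      rw [show ((θ - θ₀ : EuclideanSpace ℝ (Fin n)), (0 : ℝ))
          = (θ, (0:ℝ)) - (θ₀, (0:ℝ)) by simp [Prod.ext_iff]]
      rw [map_sub]
    simp [this]
  rw [hinner]
  have hkey := key θ
  have hcpos : 0 < -c := by linarith
  have hinv : 0 < (-c)⁻¹ := inv_pos.mpr hcpos
  have h1 : (-c)⁻¹ * (f (θ, 0) - f (θ₀, 0)) ≤ L θ - L θ₀ := by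
    rw [inv_mul_le_iff₀ hcpos]
    nlinarith
  linarith

/-- Quadratic-growth localization: if `L` is convex with a local strong-convexity-type
lower bound around `θ₀` on the ball of radius `A`, and the minimal subgradient norm at
`θ₀` is below `κA/2`, then every global minimizer is within `(2/κ)·inf‖∂L(θ₀)‖` of `θ₀`. -/
theorem stmt2 {n : ℕ} (L : EuclideanSpace ℝ (Fin n) → ℝ) (hL : ConvexOn ℝ Set.univ L)
    (θ₀ : EuclideanSpace ℝ (Fin n)) (κ A : ℝ) (hκ : 0 < κ) (hA : 0 < A)
    (subdiff : Set (EuclideanSpace ℝ (Fin n)))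
    (hsub : subdiff = {h | ∀ θ, L θ₀ + ⟪h, θ - θ₀⟫ ≤ L θ})
    (hquad : ∀ h ∈ subdiff, ∀ θ, ‖θ - θ₀‖ ≤ A →
      L θ₀ + ⟪h, θ - θ₀⟫ + κ / 2 * ‖θ - θ₀‖ ^ 2 ≤ L θ)
    (hinf : sInf ((fun h => ‖h‖) '' subdiff) < κ * A / 2)
    (θh : EuclideanSpace ℝ (Fin n)) (hmin : ∀ θ, L θh ≤ L θ) :
    ‖θh - θ₀‖ ≤ 2 / κ * sInf ((fun h => ‖h‖) '' subdiff) := by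
  set r : ℝ := ‖θh - θ₀‖ with hr
  have hrnn : 0 ≤ r := norm_nonneg _
  -- the set of subgradient norms is nonempty and bounded below
  have hne : subdiff.Nonempty := by
    obtain ⟨h, hh⟩ := exists_subgradient_aux L hL θ₀
    exact ⟨h, by rw [hsub]; exact hh⟩
  have hne' : ((fun h => ‖h‖) '' subdiff).Nonempty := hne.image _
  have hbdd : BddBelow ((fun h => ‖h‖) '' subdiff) := by
    refine ⟨0, fun x hx => ?_⟩
    obtain ⟨h, _, rfl⟩ := hx
    exact norm_nonneg h
  -- key estimate: any subgradient of small norm localizes the minimizer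
  have hstep : ∀ h ∈ subdiff, ‖h‖ < κ * A / 2 → κ / 2 * r ≤ ‖h‖ := by
    intro h hhsub hhsmall
    have hCS : ∀ θ : EuclideanSpace ℝ (Fin n), -(‖h‖ * ‖θ - θ₀‖) ≤ ⟪h, θ - θ₀⟫ := by
      intro θ
      have := abs_real_inner_le_norm h (θ - θ₀)
      exact neg_le_of_abs_le this |>.trans_eq' rfl
    -- first show r ≤ A
    have hrA : r ≤ A := by
      by_contra hcon
      push_neg at hcon
      have hrpos : 0 < r := lt_trans hA hcon
      set θ : EuclideanSpace ℝ (Fin n) := θ₀ + (A / r) • (θh - θ₀) with hθ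
      have hθsub : θ - θ₀ = (A / r) • (θh - θ₀) := by simp [hθ]
      have hb : 0 < A / r := div_pos hA hrpos
      have hb1 : A / r < 1 := (div_lt_one hrpos).mpr hcon
      have hnorm : ‖θ - θ₀‖ = A := by
        rw [hθsub, norm_smul, Real.norm_eq_abs, abs_of_pos hb, ← hr]
        field_simp
      have hq := hquad h hhsub θ (le_of_eq hnorm)
      rw [hnorm] at hq
      have hcs := hCS θ
      rw [hnorm] at hcs
      -- convexity bound : L θ ≤ L θ₀
      have hconv : L θ ≤ (1 - A / r) * L θ₀ + (A / r) * L θh := by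
        have hcomb : θ = (1 - A / r) • θ₀ + (A / r) • θh := by
          rw [hθ]
          module
        rw [hcomb]
        exact hL.2 (Set.mem_univ θ₀) (Set.mem_univ θh) (by linarith) hb.le (by ring)
      have hminθ₀ : L θh ≤ L θ₀ := hmin θ₀
      have hLθ : L θ ≤ L θ₀ := by nlinarith
      nlinarith
    -- now apply the quadratic bound at θh
    have hq := hquad h hhsub θh hrA
    rw [← hr] at hq
    have hcs := hCS θh
    rw [← hr] at hcs
    have hminθ₀ : L θh ≤ L θ₀ := hmin θ₀
    rcases eq_or_lt_of_le hrnn with hr0 | hrpos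
    · rw [← hr0]
      simpa using norm_nonneg h
    · nlinarith
  -- pick one subgradient with small norm
  obtain ⟨x, hxmem, hxlt⟩ := exists_lt_of_csInf_lt hne' hinf
  obtain ⟨h₀, hh₀sub, rfl⟩ := hxmem
  have hh₀ := hstep h₀ hh₀sub hxlt
  -- κ/2 * r is a lower bound of all subgradient norms
  have hlb : κ / 2 * r ≤ sInf ((fun h => ‖h‖) '' subdiff) := by
    apply le_csInf hne'
    rintro x ⟨h, hhsub, rfl⟩
    rcases lt_or_ge ‖h‖ (κ * A / 2) with hlt | hge
    · exact hstep h hhsub hlt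
    · linarith
  have h2κ : 0 < 2 / κ := by positivity
  calc r = 2 / κ * (κ / 2 * r) := by field_simp
    _ ≤ 2 / κ * sInf ((fun h => ‖h‖) '' subdiff) := by
        exact mul_le_mul_of_nonneg_left hlb h2κ.le
end

section
/- Let λ ≥ 0, let L ∈ C²(ℝⁿ) be convex and R : ℝⁿ → ℝ be convex, and let θ₀ ∈ ℝⁿ. Suppose there exist κ, A > 0 such that the Hessian satisfies ∇²L(θ) ⪰ κI whenever ‖θ − θ₀‖₂ ≤ A. If ‖∇L(θ₀)‖₂ + λ·inf_{h ∈ ∂R(θ₀)} ‖h‖₂ < κA/2, then L_λ(θ) = L(θ) + λR(θ) has a unique global minimizer θ̂, and ‖θ̂ − θ₀‖₂ ≤ (2/κ)(‖∇L(θ₀)‖₂ + λ·inf_{h ∈ ∂R(θ₀)} ‖h‖₂). -/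
open scoped RealInnerProductSpace
open Matrix

lemma psd_inner {n : ℕ} {M : Matrix (Fin n) (Fin n) ℝ} {κ : ℝ}
    (h : (M - κ • 1).PosSemidef) (u : EuclideanSpace ℝ (Fin n)) :
    κ * ‖u‖ ^ 2 ≤ ⟪Matrix.toEuclideanCLM (𝕜 := ℝ) M u, u⟫ := by
  have h2 := h.dotProduct_mulVec_nonneg (WithLp.equiv 2 _ u)
  have happ : ∀ i, (Matrix.toEuclideanCLM (𝕜 := ℝ) M u) i = (M *ᵥ (WithLp.equiv 2 _ u)) i :=
    fun i => rfl
  have hnorm : ‖u‖ ^ 2 = ∑ i, u i * u i := by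
    rw [EuclideanSpace.norm_eq, Real.sq_sqrt (by positivity)]; simp [sq]
  have hin : ⟪Matrix.toEuclideanCLM (𝕜 := ℝ) M u, u⟫ = ∑ i, (M *ᵥ (WithLp.equiv 2 _ u)) i * u i := by
    simp [PiLp.inner_apply, happ]
    exact Finset.sum_congr rfl fun i _ => mul_comm _ _
  simp only [dotProduct, Matrix.sub_mulVec, Matrix.smul_mulVec, Matrix.one_mulVec,
    Pi.sub_apply, Pi.smul_apply, smul_eq_mul, star_trivial, mul_sub, Finset.sum_sub_distrib] at h2
  rw [hin, hnorm]
  have : ∀ i, (WithLp.equiv 2 _ u) i = u i := fun i => rfl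
  simp only [this] at h2 ⊢
  rw [Finset.mul_sum]
  have : ∀ i ∈ Finset.univ, (M *ᵥ (WithLp.equiv 2 _ u)) i * u i = u i * (M *ᵥ (WithLp.equiv 2 _ u)) i := by
    intro i _; ring
  rw [Finset.sum_congr rfl this]
  have h3 : ∀ i, κ * (u i * u i) = u i * (κ * u i) := fun i => by ring
  simp only [h3]
  linarith [h2]
lemma taylor_lb (f f' f'' : ℝ → ℝ) (c : ℝ)
    (hf : ∀ t, HasDerivAt f (f' t) t) (hf' : ∀ t, HasDerivAt f' (f'' t) t)
    (hc : ∀ t ∈ Set.Icc (0:ℝ) 1, c ≤ f'' t) :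
    f 0 + f' 0 + c / 2 ≤ f 1 := by
  set φ : ℝ → ℝ := fun t => f t - f 0 - f' 0 * t - c * t ^ 2 / 2 with hφdef
  set φ' : ℝ → ℝ := fun t => f' t - f' 0 - c * t with hφ'def
  have hφd : ∀ t, HasDerivAt φ (φ' t) t := by
    intro t
    have := ((hf t).sub_const (f 0)).sub ((hasDerivAt_id t).const_mul (f' 0))
    have := this.sub (((hasDerivAt_pow 2 t).const_mul c).div_const 2)
    refine this.congr_deriv ?_
    simp [φ']; ring
  have hφ'd : ∀ t, HasDerivAt φ' (f'' t - c) t := by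
    intro t
    have := ((hf' t).sub_const (f' 0)).sub ((hasDerivAt_id t).const_mul c)
    refine this.congr_deriv ?_
    simp
  -- φ' monotone on [0,1]
  have hmono' : MonotoneOn φ' (Set.Icc 0 1) := by
    apply monotoneOn_of_deriv_nonneg (convex_Icc 0 1)
      (Continuous.continuousOn (continuous_iff_continuousAt.mpr fun x => (hφ'd x).continuousAt))
    · intro t ht
      exact (hφ'd t).differentiableAt.differentiableWithinAt
    · intro t ht
      rw [(hφ'd t).deriv]
      have : t ∈ Set.Icc (0:ℝ) 1 := interior_subset ht
      linarith [hc t this]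
  have hφ'0 : φ' 0 = 0 := by simp [φ']
  have hmono : MonotoneOn φ (Set.Icc 0 1) := by
    apply monotoneOn_of_deriv_nonneg (convex_Icc 0 1)
      (Continuous.continuousOn (continuous_iff_continuousAt.mpr fun x => (hφd x).continuousAt))
    · intro t ht; exact (hφd t).differentiableAt.differentiableWithinAt
    · intro t ht
      rw [(hφd t).deriv]
      have ht' : t ∈ Set.Icc (0:ℝ) 1 := interior_subset ht
      have := hmono' (Set.left_mem_Icc.mpr one_pos.le) ht' ht'.1
      rw [hφ'0] at this
      exact this
  have := hmono (Set.left_mem_Icc.mpr one_pos.le) (Set.right_mem_Icc.mpr one_pos.le) one_pos.le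
  have hφ0 : φ 0 = 0 := by simp [φ]
  rw [hφ0] at this
  simp only [φ] at this
  linarith
lemma strong_lb {n : ℕ} {L : EuclideanSpace ℝ (Fin n) → ℝ}
    {g : EuclideanSpace ℝ (Fin n) → EuclideanSpace ℝ (Fin n)}
    {H : EuclideanSpace ℝ (Fin n) → Matrix (Fin n) (Fin n) ℝ}
    (hg : ∀ θ, HasGradientAt L (g θ) θ)
    (hH : ∀ θ, HasFDerivAt g (Matrix.toEuclideanCLM (𝕜 := ℝ) (H θ)) θ)
    {θ₀ : EuclideanSpace ℝ (Fin n)} {κ A : ℝ}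
    (hPSD : ∀ θ, ‖θ - θ₀‖ ≤ A → Matrix.PosSemidef (H θ - κ • 1))
    {x y : EuclideanSpace ℝ (Fin n)} (hx : ‖x - θ₀‖ ≤ A) (hy : ‖y - θ₀‖ ≤ A) :
    L x + ⟪g x, y - x⟫ + κ / 2 * ‖y - x‖ ^ 2 ≤ L y := by
  set u := y - x with hu
  have hline : ∀ t : ℝ, HasDerivAt (fun s : ℝ => x + s • u) u t := by
    intro t
    simpa using ((hasDerivAt_id t).smul_const u).const_add x
  have hf : ∀ t : ℝ, HasDerivAt (fun s => L (x + s • u)) ⟪g (x + t • u), u⟫ t := by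
    intro t
    have := ((hg (x + t • u)).hasFDerivAt.comp_hasDerivAt t (hline t))
    simp [InnerProductSpace.toDual_apply_apply] at this
    exact this
  have hf' : ∀ t : ℝ, HasDerivAt (fun s => (⟪g (x + s • u), u⟫ : ℝ))
      ⟪Matrix.toEuclideanCLM (𝕜 := ℝ) (H (x + t • u)) u, u⟫ t := by
    intro t
    have hgd : HasDerivAt (fun s : ℝ => g (x + s • u))
        (Matrix.toEuclideanCLM (𝕜 := ℝ) (H (x + t • u)) u) t :=
      (hH (x + t • u)).comp_hasDerivAt t (hline t)
    have := hgd.inner ℝ (hasDerivAt_const t u)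
    simpa using this
  have hball : ∀ t ∈ Set.Icc (0:ℝ) 1, ‖(x + t • u) - θ₀‖ ≤ A := by
    intro t ht
    have : (x + t • u) - θ₀ = (1 - t) • (x - θ₀) + t • (y - θ₀) := by
      rw [hu]; module
    rw [this]
    calc ‖(1 - t) • (x - θ₀) + t • (y - θ₀)‖ ≤ ‖(1 - t) • (x - θ₀)‖ + ‖t • (y - θ₀)‖ :=
          norm_add_le _ _
      _ ≤ (1 - t) * A + t * A := by
          rw [norm_smul, norm_smul, Real.norm_eq_abs, Real.norm_eq_abs,
            abs_of_nonneg (by linarith [ht.2]), abs_of_nonneg ht.1]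
          exact add_le_add (mul_le_mul_of_nonneg_left hx (by linarith [ht.2]))
            (mul_le_mul_of_nonneg_left hy ht.1)
      _ = A := by ring
  have := taylor_lb (fun s => L (x + s • u)) (fun s => ⟪g (x + s • u), u⟫)
    (fun s => ⟪Matrix.toEuclideanCLM (𝕜 := ℝ) (H (x + s • u)) u, u⟫) (κ * ‖u‖ ^ 2)
    hf hf' (fun t ht => psd_inner (hPSD _ (hball t ht)) u)
  simp only [zero_smul, add_zero, one_smul] at this
  have hxy : x + u = y := by rw [hu]; abel
  rw [hxy] at this
  linarith
lemma exists_subgradient {n : ℕ} {R : EuclideanSpace ℝ (Fin n) → ℝ}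
    (hR : ConvexOn ℝ Set.univ R) (θ₀ : EuclideanSpace ℝ (Fin n)) :
    ∃ h : EuclideanSpace ℝ (Fin n), ∀ θ, R θ₀ + ⟪h, θ - θ₀⟫ ≤ R θ := by
  have hcont : Continuous R := hR.locallyLipschitz.continuous
  set S : Set (EuclideanSpace ℝ (Fin n) × ℝ) := {p | R p.1 < p.2} with hS
  have hSopen : IsOpen S := isOpen_lt (by fun_prop) continuous_snd
  have hSconv : Convex ℝ S := by
    intro p hp q hq a b ha hb hab
    simp only [hS, Set.mem_setOf_eq] at hp hq ⊢
    have h1 : R (a • p.1 + b • q.1) ≤ a • R p.1 + b • R q.1 :=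
      hR.2 (Set.mem_univ _) (Set.mem_univ _) ha hb hab
    simp only [smul_eq_mul] at h1
    have h2 : a * R p.1 + b * R q.1 < a * p.2 + b * q.2 := by
      rcases lt_or_eq_of_le ha with h | h
      · exact add_lt_add_of_lt_of_le (mul_lt_mul_of_pos_left hp h)
          (mul_le_mul_of_nonneg_left hq.le hb)
      · have hb1 : b = 1 := by linarith
        simp [← h, hb1, hq]
    calc R ((a • p + b • q).1) = R (a • p.1 + b • q.1) := rfl
      _ < a * p.2 + b * q.2 := lt_of_le_of_lt h1 h2
      _ = (a • p + b • q).2 := rfl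
  have hp₀ : ((θ₀, R θ₀) : EuclideanSpace ℝ (Fin n) × ℝ) ∉ S := by simp [hS]
  obtain ⟨f, hf⟩ := geometric_hahn_banach_open_point hSconv hSopen hp₀
  set β : ℝ := f (0, 1) with hβ
  have hsplit : ∀ (x : EuclideanSpace ℝ (Fin n)) (t : ℝ), f (x, t) = f (x, 0) + t * β := by
    intro x t
    have : (x, t) = (x, (0:ℝ)) + t • ((0 : EuclideanSpace ℝ (Fin n)), (1:ℝ)) := by
      simp [Prod.ext_iff]
    rw [this, map_add, _root_.map_smul, smul_eq_mul, hβ]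
  have hβneg : β < 0 := by
    have h := hf (θ₀, R θ₀ + 1) (by simp [hS])
    rw [hsplit θ₀ (R θ₀ + 1), hsplit θ₀ (R θ₀)] at h
    nlinarith
  have hbpos : 0 < -β := by linarith
  have hmain : ∀ x, f (x, 0) + R x * β ≤ f (θ₀, 0) + R θ₀ * β := by
    intro x
    by_contra hcon
    push_neg at hcon
    set δ := f (x, 0) + R x * β - (f (θ₀, 0) + R θ₀ * β) with hδ
    have hδpos : 0 < δ := by simp only [hδ]; linarith
    have h := hf (x, R x + δ / (2 * -β)) (by simp only [hS, Set.mem_setOf_eq]; nlinarith [div_pos hδpos (by linarith : (0:ℝ) < 2 * -β)])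
    rw [hsplit x _, hsplit θ₀ (R θ₀)] at h
    have hεβ : δ / (2 * -β) * β = -(δ / 2) := by
      have : β ≠ 0 := ne_of_lt hβneg
      field_simp
    have hexp : (R x + δ / (2 * -β)) * β = R x * β + δ / (2 * -β) * β := by ring
    rw [hexp, hεβ] at h
    simp only [hδ] at h hδpos
    linarith
  set φ : EuclideanSpace ℝ (Fin n) →L[ℝ] ℝ :=
    f.comp (ContinuousLinearMap.inl ℝ (EuclideanSpace ℝ (Fin n)) ℝ) with hφ
  set u : EuclideanSpace ℝ (Fin n) := (InnerProductSpace.toDual ℝ _).symm φ with hu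
  have huapp : ∀ x, ⟪u, x⟫ = f (x, 0) := by
    intro x
    rw [hu, InnerProductSpace.toDual_symm_apply]
    rfl
  refine ⟨(-β)⁻¹ • u, fun θ => ?_⟩
  have h1 := hmain θ
  rw [← huapp θ, ← huapp θ₀] at h1
  have h2 : ⟪u, θ⟫ - ⟪u, θ₀⟫ ≤ -β * (R θ - R θ₀) := by nlinarith
  have h3 : ⟪((-β)⁻¹ • u : EuclideanSpace ℝ (Fin n)), θ - θ₀⟫
      = (-β)⁻¹ * (⟪u, θ⟫ - ⟪u, θ₀⟫) := by
    rw [real_inner_smul_left, inner_sub_right]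
  have h5 := mul_le_mul_of_nonneg_left h2 (inv_pos.mpr hbpos).le
  rw [← mul_assoc, inv_mul_cancel₀ (ne_of_gt hbpos), one_mul] at h5
  rw [h3]
  linarith



set_option maxHeartbeats 1000000 in
/-- If `L` is C² convex with Hessian `⪰ κI` on a ball of radius `A` around `θ₀`, `R` is
convex, `λ ≥ 0` and `‖∇L(θ₀)‖₂ + λ·inf_{h∈∂R(θ₀)}‖h‖₂ < κA/2`, then `L + λR` has a unique
global minimizer `θ̂` with `‖θ̂ − θ₀‖₂ ≤ (2/κ)(‖∇L(θ₀)‖₂ + λ·inf_{h∈∂R(θ₀)}‖h‖₂)`. -/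
theorem stmt3 {n : ℕ} (L R : EuclideanSpace ℝ (Fin n) → ℝ)
    (hL : ConvexOn ℝ Set.univ L) (hR : ConvexOn ℝ Set.univ R)
    (g : EuclideanSpace ℝ (Fin n) → EuclideanSpace ℝ (Fin n))
    (H : EuclideanSpace ℝ (Fin n) → Matrix (Fin n) (Fin n) ℝ)
    (hg : ∀ θ, HasGradientAt L (g θ) θ)
    (hH : ∀ θ, HasFDerivAt g (Matrix.toEuclideanCLM (𝕜 := ℝ) (H θ)) θ)
    (hHc : Continuous H)
    (θ₀ : EuclideanSpace ℝ (Fin n)) (lam κ A : ℝ)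
    (hlam : 0 ≤ lam) (hκ : 0 < κ) (hA : 0 < A)
    (hPSD : ∀ θ, ‖θ - θ₀‖ ≤ A → Matrix.PosSemidef (H θ - κ • 1))
    (hsmall : ‖g θ₀‖ +
        lam * sInf ((fun h => ‖h‖) '' {h | ∀ θ, R θ₀ + ⟪h, θ - θ₀⟫ ≤ R θ}) < κ * A / 2) :
    ∃ θh : EuclideanSpace ℝ (Fin n),
      (∀ θ, L θh + lam * R θh ≤ L θ + lam * R θ) ∧
      (∀ θ', (∀ θ, L θ' + lam * R θ' ≤ L θ + lam * R θ) → θ' = θh) ∧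
      ‖θh - θ₀‖ ≤ 2 / κ *
        (‖g θ₀‖ + lam * sInf ((fun h => ‖h‖) '' {h | ∀ θ, R θ₀ + ⟪h, θ - θ₀⟫ ≤ R θ})) := by
  set Sset : Set (EuclideanSpace ℝ (Fin n)) := {h | ∀ θ, R θ₀ + ⟪h, θ - θ₀⟫ ≤ R θ} with hSset
  set sIn : ℝ := sInf ((fun h => ‖h‖) '' Sset) with hsIn
  set F : EuclideanSpace ℝ (Fin n) → ℝ := fun θ => L θ + lam * R θ with hF
  have hFconv : ConvexOn ℝ Set.univ F := by
    have h2 : ConvexOn ℝ Set.univ (fun θ => lam * R θ) := hR.smul hlam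
    exact hL.add h2
  have hLcont : Continuous L :=
    continuous_iff_continuousAt.mpr fun x => (hg x).hasFDerivAt.continuousAt
  have hFcont : Continuous F := by
    exact hLcont.add (continuous_const.mul hR.locallyLipschitz.continuous)
  have hSne : Sset.Nonempty := exists_subgradient hR θ₀
  have hsIn0 : 0 ≤ sIn :=
    Real.sInf_nonneg (by rintro a ⟨h, -, rfl⟩; exact norm_nonneg h)
  -- Step 1: lower bound
  have step1 : ∀ h ∈ Sset, ∀ θ : EuclideanSpace ℝ (Fin n), ‖θ - θ₀‖ ≤ A →
      F θ₀ - (‖g θ₀‖ + lam * ‖h‖) * ‖θ - θ₀‖ + κ / 2 * ‖θ - θ₀‖ ^ 2 ≤ F θ := by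
    intro h hh θ hθ
    have hL1 : L θ₀ + ⟪g θ₀, θ - θ₀⟫ + κ / 2 * ‖θ - θ₀‖ ^ 2 ≤ L θ :=
      strong_lb hg hH hPSD (by simp [hA.le]) hθ
    have hR1 : lam * R θ₀ + lam * ⟪h, θ - θ₀⟫ ≤ lam * R θ := by
      have := hh θ
      nlinarith
    have hi1 : -(‖g θ₀‖ * ‖θ - θ₀‖) ≤ ⟪g θ₀, θ - θ₀⟫ :=
      neg_le_of_neg_le (by nlinarith [abs_real_inner_le_norm (g θ₀) (θ - θ₀), neg_abs_le (⟪g θ₀, θ - θ₀⟫ : ℝ)])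
    have hi2 : -(lam * (‖h‖ * ‖θ - θ₀‖)) ≤ lam * ⟪h, θ - θ₀⟫ := by
      have h1 : -(‖h‖ * ‖θ - θ₀‖) ≤ ⟪h, θ - θ₀⟫ := by
        nlinarith [abs_real_inner_le_norm h (θ - θ₀), neg_abs_le (⟪h, θ - θ₀⟫ : ℝ)]
      nlinarith
    simp only [hF]
    nlinarith
  -- Step 3: a good subgradient
  have step3 : ∃ h₀ ∈ Sset, ‖g θ₀‖ + lam * ‖h₀‖ < κ * A / 2 := by
    rcases eq_or_lt_of_le hlam with hl0 | hlpos
    · obtain ⟨h₀, hh₀⟩ := hSne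
      refine ⟨h₀, hh₀, ?_⟩
      rw [← hl0] at hsmall ⊢
      simpa using hsmall
    · have hε : 0 < (κ * A / 2 - (‖g θ₀‖ + lam * sIn)) / lam := by
        apply div_pos _ hlpos
        linarith [hsmall]
      obtain ⟨a, haS, ha⟩ := Real.lt_sInf_add_pos (hSne.image (fun h => ‖h‖)) hε
      obtain ⟨h₀, hh₀, rfl⟩ := haS
      refine ⟨h₀, hh₀, ?_⟩
      have ha' : ‖h₀‖ < sIn + (κ * A / 2 - (‖g θ₀‖ + lam * sIn)) / lam := ha
      have h1 := mul_lt_mul_of_pos_left ha' hlpos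
      rw [mul_add, mul_div_cancel₀ _ (ne_of_gt hlpos)] at h1
      linarith
  obtain ⟨h₀, hh₀, hC⟩ := step3
  set C : ℝ := ‖g θ₀‖ + lam * ‖h₀‖ with hCdef
  have hC0 : 0 ≤ C := by positivity
  -- Step 2: minimizer on closed ball
  obtain ⟨θh, hθhK, hθhmin⟩ := (isCompact_closedBall θ₀ A).exists_isMinOn
    ⟨θ₀, Metric.mem_closedBall_self hA.le⟩ hFcont.continuousOn
  have hθhA : ‖θh - θ₀‖ ≤ A := by
    have := hθhK
    rw [Metric.mem_closedBall, dist_eq_norm] at this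
    exact this
  have hθhθ₀ : F θh ≤ F θ₀ := hθhmin (Metric.mem_closedBall_self hA.le)
  -- Step 4: radius bound with C
  have rbound : ∀ h ∈ Sset, ‖θh - θ₀‖ ≤ 2 / κ * (‖g θ₀‖ + lam * ‖h‖) := by
    intro h hh
    have h1 := step1 h hh θh hθhA
    set r := ‖θh - θ₀‖ with hr
    have hr0 : 0 ≤ r := norm_nonneg _
    clear_value r
    have hCh : 0 ≤ ‖g θ₀‖ + lam * ‖h‖ := by positivity
    simp only [hF] at h1 hθhθ₀
    have key : κ / 2 * r ^ 2 ≤ (‖g θ₀‖ + lam * ‖h‖) * r := by linarith [h1, hθhθ₀]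
    rcases eq_or_lt_of_le hr0 with h0 | hrpos
    · rw [← h0]; positivity
    · have h2 : r * κ ≤ 2 * (‖g θ₀‖ + lam * ‖h‖) := by nlinarith
      have h3 := (le_div_iff₀ hκ).mpr h2
      calc r ≤ 2 * (‖g θ₀‖ + lam * ‖h‖) / κ := h3
        _ = 2 / κ * (‖g θ₀‖ + lam * ‖h‖) := by ring
  have hrA : ‖θh - θ₀‖ < A := by
    calc ‖θh - θ₀‖ ≤ 2 / κ * C := rbound h₀ hh₀
      _ < 2 / κ * (κ * A / 2) := by
          exact mul_lt_mul_of_pos_left hC (div_pos two_pos hκ)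
      _ = A := by field_simp
  -- Step 5: global min
  have hglobal : ∀ θ, F θh ≤ F θ := by
    intro θ
    by_cases hθ : ‖θ - θ₀‖ ≤ A
    · exact hθhmin (by simpa [Metric.mem_closedBall, dist_eq_norm] using hθ)
    · push_neg at hθ
      have hne : θ - θh ≠ 0 := by
        intro hx
        rw [sub_eq_zero] at hx
        rw [hx] at hθ
        linarith [hθhA]
      set t : ℝ := (A - ‖θh - θ₀‖) / ‖θ - θh‖ with ht
      have htpos : 0 < t := div_pos (by linarith) (norm_pos_iff.mpr hne)
      have ht1 : t ≤ 1 := by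
        rw [div_le_one (norm_pos_iff.mpr hne)]
        have : A - ‖θh - θ₀‖ ≤ ‖θ - θ₀‖ - ‖θh - θ₀‖ := by linarith
        calc A - ‖θh - θ₀‖ ≤ ‖θ - θ₀‖ - ‖θh - θ₀‖ := this
          _ ≤ ‖θ - θh‖ := by
              have := norm_sub_le_norm_sub_add_norm_sub θ θh θ₀
              linarith [norm_sub_norm_le (θ - θ₀) (θh - θ₀),
                (by rw [sub_sub_sub_cancel_right] : (θ - θ₀) - (θh - θ₀) = θ - θh)]
      have hz : ‖((1 - t) • θh + t • θ) - θ₀‖ ≤ A := by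
        have heq : ((1 - t) • θh + t • θ) - θ₀ = (θh - θ₀) + t • (θ - θh) := by module
        rw [heq]
        calc ‖(θh - θ₀) + t • (θ - θh)‖ ≤ ‖θh - θ₀‖ + ‖t • (θ - θh)‖ := norm_add_le _ _
          _ = ‖θh - θ₀‖ + t * ‖θ - θh‖ := by
              rw [norm_smul, Real.norm_eq_abs, abs_of_pos htpos]
          _ = ‖θh - θ₀‖ + (A - ‖θh - θ₀‖) := by
              rw [ht, div_mul_cancel₀ _ (norm_ne_zero_iff.mpr hne)]
          _ = A := by ring
      have hconv := hFconv.2 (Set.mem_univ θh) (Set.mem_univ θ)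
        (by linarith : (0:ℝ) ≤ 1 - t) htpos.le (by ring)
      have hmin := hθhmin (by simpa [Metric.mem_closedBall, dist_eq_norm] using hz)
      simp only [smul_eq_mul] at hconv
      have hmin' : F θh ≤ F ((1 - t) • θh + t • θ) := hmin
      exact le_of_mul_le_mul_left (by linarith [hconv, hmin']) htpos
  -- Step 6: any global min is in the ball
  have hball : ∀ θ', (∀ θ, F θ' ≤ F θ) → ‖θ' - θ₀‖ ≤ A := by
    intro θ' hθ'
    by_contra hcon
    push_neg at hcon
    set s : ℝ := A / ‖θ' - θ₀‖ with hs
    have hr'pos : 0 < ‖θ' - θ₀‖ := by linarith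
    have hspos : 0 < s := div_pos hA hr'pos
    have hs1 : s < 1 := (div_lt_one hr'pos).mpr hcon
    set z := (1 - s) • θ₀ + s • θ' with hz
    have hznorm : ‖z - θ₀‖ = A := by
      have heq : z - θ₀ = s • (θ' - θ₀) := by rw [hz]; module
      rw [heq, norm_smul, Real.norm_eq_abs, abs_of_pos hspos, hs,
        div_mul_cancel₀ _ (ne_of_gt hr'pos)]
    have hlow := step1 h₀ hh₀ z (le_of_eq hznorm)
    rw [hznorm] at hlow
    have hconv := hFconv.2 (Set.mem_univ θ₀) (Set.mem_univ θ')
      (by linarith : (0:ℝ) ≤ 1 - s) hspos.le (by ring)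
    simp only [smul_eq_mul] at hconv
    have hθ'min : F θ' ≤ F θ₀ := hθ' θ₀
    have hFz : F z ≤ F θ₀ := by
      calc F z ≤ (1 - s) * F θ₀ + s * F θ' := hconv
        _ ≤ (1 - s) * F θ₀ + s * F θ₀ := by
            nlinarith [mul_le_mul_of_nonneg_left hθ'min hspos.le]
        _ = F θ₀ := by ring
    simp only [hF] at hlow hFz
    nlinarith [hlow, hFz, mul_lt_mul_of_pos_right hC hA]
  -- Step 7: uniqueness
  have huniq : ∀ θ', (∀ θ, F θ' ≤ F θ) → θ' = θh := by
    intro θ' hθ'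
    have hθ'A : ‖θ' - θ₀‖ ≤ A := hball θ' hθ'
    have hFeq : F θ' = F θh := le_antisymm (hθ' θh) (hglobal θ')
    set m := ((1:ℝ)/2) • θ' + ((1:ℝ)/2) • θh with hm
    have hmA : ‖m - θ₀‖ ≤ A := by
      have heq : m - θ₀ = ((1:ℝ)/2) • (θ' - θ₀) + ((1:ℝ)/2) • (θh - θ₀) := by
        rw [hm]; module
      rw [heq]
      calc ‖((1:ℝ)/2) • (θ' - θ₀) + ((1:ℝ)/2) • (θh - θ₀)‖
          ≤ ‖((1:ℝ)/2) • (θ' - θ₀)‖ + ‖((1:ℝ)/2) • (θh - θ₀)‖ := norm_add_le _ _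
        _ = (1/2) * ‖θ' - θ₀‖ + (1/2) * ‖θh - θ₀‖ := by
            rw [norm_smul, norm_smul]; norm_num
        _ ≤ A := by linarith
    have h1 : L m + ⟪g m, θ' - m⟫ + κ / 2 * ‖θ' - m‖ ^ 2 ≤ L θ' :=
      strong_lb hg hH hPSD hmA hθ'A
    have h2 : L m + ⟪g m, θh - m⟫ + κ / 2 * ‖θh - m‖ ^ 2 ≤ L θh :=
      strong_lb hg hH hPSD hmA hθhA
    have hneg : θ' - m = -(θh - m) := by rw [hm]; module
    have hinner : ⟪g m, θ' - m⟫ = -⟪g m, θh - m⟫ := by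
      rw [hneg, inner_neg_right]
    have hnorm : ‖θ' - m‖ = ‖θh - m‖ := by rw [hneg, norm_neg]
    have hRm : lam * R m ≤ (1/2) * (lam * R θ') + (1/2) * (lam * R θh) := by
      have := hR.2 (Set.mem_univ θ') (Set.mem_univ θh)
        (by norm_num : (0:ℝ) ≤ 1/2) (by norm_num : (0:ℝ) ≤ 1/2) (by norm_num)
      simp only [smul_eq_mul] at this
      nlinarith
    have hFm : F θh ≤ F m := hglobal m
    have hzero : ‖θh - m‖ ^ 2 ≤ 0 := by
      simp only [hF] at hFm hFeq h1 h2 ⊢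
      nlinarith [h1, h2, hRm, hFm, hFeq, hinner, hnorm]
    have : θh - m = 0 := by
      have := norm_nonneg (θh - m)
      have h0 : ‖θh - m‖ = 0 := by nlinarith
      exact norm_eq_zero.mp h0
    have hmh : θh = m := by rwa [sub_eq_zero] at this
    have : θ' - m = 0 := by rw [hneg, hmh]; simp
    rw [hmh]
    rwa [sub_eq_zero] at this
  -- Step 8: final bound
  refine ⟨θh, hglobal, huniq, ?_⟩
  rcases eq_or_lt_of_le hlam with hl0 | hlpos
  · have := rbound h₀ hh₀
    rw [← hl0] at this ⊢
    simpa using this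
  · apply le_of_forall_pos_le_add
    intro ε hε
    have hε' : 0 < ε * κ / (2 * lam) := by positivity
    obtain ⟨a, haS, ha⟩ := Real.lt_sInf_add_pos (hSne.image (fun h => ‖h‖)) hε'
    obtain ⟨h, hh, rfl⟩ := haS
    have ha' : ‖h‖ < sIn + ε * κ / (2 * lam) := ha
    have hb := rbound h hh
    have : 2 / κ * (‖g θ₀‖ + lam * ‖h‖) ≤ 2 / κ * (‖g θ₀‖ + lam * sIn) + ε := by
      have h2 : lam * ‖h‖ < lam * sIn + lam * (ε * κ / (2 * lam)) := by
        nlinarith [ha', mul_lt_mul_of_pos_left ha' hlpos]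
      have h3 : lam * (ε * κ / (2 * lam)) = ε * κ / 2 := by
        field_simp
      rw [h3] at h2
      have h4 : 2 / κ * (ε * κ / 2) = ε := by field_simp
      nlinarith [mul_lt_mul_of_pos_left h2 (by positivity : (0:ℝ) < 2 / κ)]
    linarith
end

section
/- Let L ∈ C²(ℝᵖ) be convex and R : ℝᵖ → ℝ be a convex function such that R(α + β) = R(α) + R(β) for all α ∈ M and β ∈ M⊥, where M is a linear subspace of ℝᵖ. Suppose there is a continuous function R* : ℝᵖ → ℝ with |⟨α, β⟩| ≤ R(α)R*(β) for all α ∈ M⊥, β ∈ ℝᵖ. Let λ ≥ 0, L_λ(θ) = L(θ) + λR(θ), and let θ̂ ∈ argmin_{θ ∈ M} L_λ(θ). If R*(∇L(θ̂)) < λ and θᵀ∇²L(θ̂)θ > 0 for all nonzero θ ∈ M, then θ̂ is the unique global minimizer of L_λ over all of ℝᵖ. -/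
open scoped RealInnerProductSpace

lemma gradineq {E : Type*} [NormedAddCommGroup E] [InnerProductSpace ℝ E] [CompleteSpace E]
    {f : E → ℝ} (hf : ConvexOn ℝ Set.univ f) {x v gx : E}
    (h : HasGradientAt f gx x) : f x + ⟪gx, v⟫ ≤ f (x + v) := by
  have hc : HasDerivAt (fun t : ℝ => f (x + t • v)) ⟪gx, v⟫ 0 := by
    have h1 : HasDerivAt (fun t : ℝ => x + t • v) v 0 := by
      simpa using ((hasDerivAt_id (0:ℝ)).smul_const v).const_add x
    have h2 : HasFDerivAt f ((InnerProductSpace.toDual ℝ E) gx) (x + (0:ℝ) • v) := by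
      simpa using h.hasFDerivAt
    have := (h2.comp_hasDerivAt 0 h1)
    simpa [InnerProductSpace.toDual_apply_apply, Function.comp_def] using this
  have hq : ConvexOn ℝ Set.univ (fun t : ℝ => f (x + t • v)) := by
    refine ⟨convex_univ, fun t1 _ t2 _ a b ha hb hab => ?_⟩
    have h2 := hf.2 (Set.mem_univ (x + t1 • v)) (Set.mem_univ (x + t2 • v)) ha hb hab
    have h3 : a • (x + t1 • v) + b • (x + t2 • v) = (a+b) • x + (a • t1 + b • t2) • v := by
      simp only [smul_eq_mul]; module
    rw [h3, hab, one_smul] at h2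
    simpa using h2
  have := hq.le_slope_of_hasDerivAt (Set.mem_univ (0:ℝ)) (Set.mem_univ (1:ℝ))
    (by norm_num) hc
  rw [slope_def_field] at this
  simp only [one_smul, zero_smul, add_zero] at this
  linarith [this]

set_option maxHeartbeats 1000000 in
/-- Dual certificate lemma: if `θ̂` minimizes `L + λR` over a subspace `M`, the penalty
decomposes additively over `M ⊕ M⊥`, `|⟨α,β⟩| ≤ R(α)R*(β)` for `α ∈ M⊥`, the dual norm of
the gradient at `θ̂` is `< λ`, and the Hessian at `θ̂` is positive definite on `M`, then
`θ̂` is the unique global minimizer of `L + λR` over the whole space. -/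
theorem stmt4 {p : ℕ} (L R Rstar : EuclideanSpace ℝ (Fin p) → ℝ)
    (hL : ConvexOn ℝ Set.univ L) (hR : ConvexOn ℝ Set.univ R)
    (g : EuclideanSpace ℝ (Fin p) → EuclideanSpace ℝ (Fin p))
    (H : EuclideanSpace ℝ (Fin p) → Matrix (Fin p) (Fin p) ℝ)
    (hg : ∀ θ, HasGradientAt L (g θ) θ)
    (hH : ∀ θ, HasFDerivAt g (Matrix.toEuclideanCLM (𝕜 := ℝ) (H θ)) θ)
    (hHc : Continuous H)
    (M : Submodule ℝ (EuclideanSpace ℝ (Fin p)))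
    (hRadd : ∀ α ∈ M, ∀ β ∈ Mᗮ, R (α + β) = R α + R β)
    (hRstarCont : Continuous Rstar)
    (hpair : ∀ α ∈ Mᗮ, ∀ β : EuclideanSpace ℝ (Fin p), |⟪α, β⟫| ≤ R α * Rstar β)
    (lam : ℝ) (hlam : 0 ≤ lam)
    (θh : EuclideanSpace ℝ (Fin p)) (hθhM : θh ∈ M)
    (hmin : ∀ θ ∈ M, L θh + lam * R θh ≤ L θ + lam * R θ)
    (hdual : Rstar (g θh) < lam)
    (hpos : ∀ θ ∈ M, θ ≠ 0 → 0 < ∑ i, ∑ j, θ i * H θh i j * θ j) :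
    ∀ θ : EuclideanSpace ℝ (Fin p), θ ≠ θh → L θh + lam * R θh < L θ + lam * R θ := by
  classical
  set F : EuclideanSpace ℝ (Fin p) → ℝ := fun x => L x + lam * R x with hF
  have hgc : Continuous g := by
    rw [continuous_iff_continuousAt]
    exact fun x => (hH x).differentiableAt.continuousAt
  -- R positive on Mᗮ \ {0}
  have hRpos : ∀ β ∈ Mᗮ, β ≠ 0 → 0 < R β := by
    intro β hβ hβ0
    have hb : (0:ℝ) < ‖β‖ := norm_pos_iff.mpr hβ0
    have hn : (0:ℝ) < ‖β‖ ^ 2 := by positivity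
    have h1 : ‖β‖ ^ 2 ≤ R β * Rstar β := by
      have := hpair β hβ β
      rwa [real_inner_self_eq_norm_sq, abs_of_nonneg (by positivity)] at this
    rcases lt_trichotomy (R β) 0 with hneg | hzero | hposs
    · exfalso
      have hsb : Rstar β < 0 := by
        by_contra hcon
        push_neg at hcon
        nlinarith [mul_nonpos_of_nonpos_of_nonneg hneg.le hcon]
      have h2 := hpair (-β) (neg_mem hβ) β
      rw [inner_neg_left, abs_neg, real_inner_self_eq_norm_sq,
        abs_of_nonneg (by positivity)] at h2
      have hRn : R (-β) < 0 := by
        by_contra hcon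
        push_neg at hcon
        nlinarith [mul_nonpos_of_nonneg_of_nonpos hcon hsb.le]
      have hconv := hR.2 (Set.mem_univ β) (Set.mem_univ (-β))
        (by norm_num : (0:ℝ) ≤ 1/2) (by norm_num : (0:ℝ) ≤ 1/2) (by norm_num)
      have hz : (1/2 : ℝ) • β + (1/2 : ℝ) • (-β) = (0:EuclideanSpace ℝ (Fin p)) := by module
      rw [hz] at hconv
      have hR0 : R 0 = 0 := by
        have := hRadd 0 (zero_mem M) 0 (zero_mem Mᗮ)
        simpa using this.symm
      simp only [smul_eq_mul, hR0] at hconv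
      nlinarith
    · exfalso; rw [hzero] at h1; nlinarith
    · exact hposs
  -- strict minimality over M
  have hstrictM : ∀ α ∈ M, α ≠ θh → F θh < F α := by
    intro α hαM hαne
    rcases lt_or_ge (F θh) (F α) with h | h
    · exact h
    have heq : F α = F θh := le_antisymm h (hmin α hαM)
    exfalso
    set v : EuclideanSpace ℝ (Fin p) := α - θh with hv
    have hvM : v ∈ M := sub_mem hαM hθhM
    have hv0 : v ≠ 0 := sub_ne_zero.mpr hαne
    set c : ℝ → EuclideanSpace ℝ (Fin p) := fun t => θh + t • v with hc
    have hcM : ∀ t, c t ∈ M := fun t => add_mem hθhM (Submodule.smul_mem M t hvM)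
    -- L is affine along the segment
    have haff : ∀ t ∈ Set.Icc (0:ℝ) 1, L (c t) = (1 - t) * L θh + t * L α := by
      intro t ht
      have hct : c t = (1 - t) • θh + t • α := by simp only [hc, hv]; module
      have hLle : L (c t) ≤ (1 - t) * L θh + t * L α := by
        have := hL.2 (Set.mem_univ θh) (Set.mem_univ α)
          (show (0:ℝ) ≤ 1 - t by linarith [ht.2]) ht.1 (show 1 - t + t = 1 by ring)
        rw [← hct] at this; simpa using this
      have hRle : R (c t) ≤ (1 - t) * R θh + t * R α := by
        have := hR.2 (Set.mem_univ θh) (Set.mem_univ α)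
          (show (0:ℝ) ≤ 1 - t by linarith [ht.2]) ht.1 (show 1 - t + t = 1 by ring)
        rw [← hct] at this; simpa using this
      have hFm := hmin (c t) (hcM t)
      have hlamR : lam * R (c t) ≤ lam * ((1 - t) * R θh + t * R α) :=
        mul_le_mul_of_nonneg_left hRle hlam
      have heqt : t * (L α + lam * R α) = t * (L θh + lam * R θh) := by
        simp only [hF] at heq; rw [heq]
      refine le_antisymm hLle ?_
      nlinarith [hFm, hlamR, heqt]
    -- derivative of L along segment is constant s on Ioo 0 1
    set s : ℝ := L α - L θh with hs
    have hderiv : ∀ t : ℝ, HasDerivAt (fun u => L (c u)) ⟪g (c t), v⟫ t := by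
      intro t
      have h1 : HasDerivAt c v t := by
        simpa [hc] using ((hasDerivAt_id t).smul_const v).const_add θh
      have h2 : HasFDerivAt L ((InnerProductSpace.toDual ℝ (EuclideanSpace ℝ (Fin p))) (g (c t))) (c t) :=
        (hg (c t)).hasFDerivAt
      have := h2.comp_hasDerivAt t h1
      simpa [InnerProductSpace.toDual_apply_apply, Function.comp_def] using this
    have hconst : ∀ t ∈ Set.Ioo (0:ℝ) 1, ⟪g (c t), v⟫ = s := by
      intro t ht
      have h1 : HasDerivAt (fun u : ℝ => (1 - u) * L θh + u * L α) s t := by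
        have h0 : HasDerivAt (fun u : ℝ => (1 - u) * L θh + u * L α)
            ((-1) * L θh + 1 * L α) t :=
          (((hasDerivAt_id t).const_sub 1).mul_const (L θh)).add
            ((hasDerivAt_id t).mul_const (L α))
        convert h0 using 1
        rw [hs]; ring
      have h2 : (fun u => L (c u)) =ᶠ[nhds t] fun u : ℝ => (1 - u) * L θh + u * L α := by
        filter_upwards [Ioo_mem_nhds ht.1 ht.2] with u hu
        exact haff u (Set.mem_Icc_of_Ioo hu)
      exact (hderiv t).unique (h1.congr_of_eventuallyEq h2)
    have h0 : ⟪g θh, v⟫ = s := by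
      have hcont : Continuous fun t : ℝ => ⟪g (c t), v⟫ := by
        have hcc : Continuous c := continuous_const.add (continuous_id.smul continuous_const)
        exact (hgc.comp hcc).inner continuous_const
      have hne : (nhdsWithin (0:ℝ) (Set.Ioo 0 1)).NeBot := by
        rw [← mem_closure_iff_nhdsWithin_neBot, closure_Ioo (by norm_num : (0:ℝ) ≠ 1)]
        exact ⟨le_refl 0, by norm_num⟩
      have t1 : Filter.Tendsto (fun t : ℝ => ⟪g (c t), v⟫) (nhdsWithin 0 (Set.Ioo 0 1))
          (nhds ⟪g (c 0), v⟫) := (hcont.tendsto 0).mono_left nhdsWithin_le_nhds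
      have t2 : Filter.Tendsto (fun t : ℝ => ⟪g (c t), v⟫) (nhdsWithin 0 (Set.Ioo 0 1))
          (nhds s) := by
        apply Filter.Tendsto.congr' _ tendsto_const_nhds
        filter_upwards [self_mem_nhdsWithin] with u hu
        exact (hconst u hu).symm
      have : ⟪g (c 0), v⟫ = s := tendsto_nhds_unique t1 t2
      simpa [hc] using this
    -- second derivative at 0
    set A := Matrix.toEuclideanCLM (𝕜 := ℝ) (H θh) with hA
    have hd : HasDerivAt (fun t : ℝ => ⟪g (c t), v⟫) ⟪A v, v⟫ 0 := by
      have h1 : HasDerivAt c v 0 := by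
        simpa [hc] using ((hasDerivAt_id (0:ℝ)).smul_const v).const_add θh
      have hc0 : c 0 = θh := by simp [hc]
      have h2 : HasFDerivAt g A (c 0) := by rw [hA, hc0]; exact hH θh
      have h3 : HasDerivAt (fun t => g (c t)) (A v) 0 := h2.comp_hasDerivAt 0 h1
      exact ((innerSL ℝ (E := EuclideanSpace ℝ (Fin p))).flip v).hasFDerivAt.comp_hasDerivAt 0 h3
    have hzero : ⟪A v, v⟫ = 0 := by
      have hud : UniqueDiffWithinAt ℝ (Set.Ioo (0:ℝ) 1) 0 := by
        apply uniqueDiffWithinAt_convex (convex_Ioo 0 1)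
        · rw [interior_Ioo]; exact ⟨1/2, by norm_num, by norm_num⟩
        · rw [closure_Ioo (by norm_num : (0:ℝ) ≠ 1)]; exact ⟨le_refl 0, by norm_num⟩
      have hc1 : HasDerivWithinAt (fun t : ℝ => ⟪g (c t), v⟫) 0 (Set.Ioo 0 1) 0 := by
        apply (hasDerivWithinAt_const (0:ℝ) (Set.Ioo (0:ℝ) 1) s).congr
        · intro u hu; exact hconst u hu
        · simpa [hc] using h0
      have hc2 : HasDerivWithinAt (fun t : ℝ => ⟪g (c t), v⟫) ⟪A v, v⟫ (Set.Ioo 0 1) 0 :=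
        hd.hasDerivWithinAt
      have := hud.eq hc2.hasFDerivWithinAt hc1.hasFDerivWithinAt
      have := congrFun (congrArg DFunLike.coe this) 1
      simpa using this
    have hsum : (0:ℝ) < ∑ i, ∑ j, v i * H θh i j * v j := hpos v hvM hv0
    have hAv : ⟪A v, v⟫ = ∑ i, ∑ j, v i * H θh i j * v j := by
      have h1 : ∀ i, (A v) i = ∑ j, H θh i j * v j := by
        intro i
        have h2 := Matrix.ofLp_toEuclideanCLM (𝕜 := ℝ) (H θh) v
        have h3 := congrFun h2 i
        exact h3
      have h4 : ⟪A v, v⟫ = ∑ i, (A v) i * v i := by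
        simp [PiLp.inner_apply, mul_comm]
      rw [h4]
      refine Finset.sum_congr rfl fun i _ => ?_
      rw [h1 i, Finset.sum_mul]
      exact Finset.sum_congr rfl fun j _ => by ring
    rw [hAv] at hzero
    linarith
  -- local strict minimality
  have hPθh : (M.orthogonalProjectionOnto θh : EuclideanSpace ℝ (Fin p)) = θh :=
    Submodule.starProjection_eq_self_iff.mpr hθhM
  have hkcont : Continuous fun x : EuclideanSpace ℝ (Fin p) =>
      Rstar (g ((M.orthogonalProjectionOnto x : EuclideanSpace ℝ (Fin p)))) :=
    hRstarCont.comp (hgc.comp (continuous_subtype_val.comp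
      (M.orthogonalProjectionOnto).continuous))
  have hopen : IsOpen {x : EuclideanSpace ℝ (Fin p) |
      Rstar (g ((M.orthogonalProjectionOnto x : EuclideanSpace ℝ (Fin p)))) < lam} :=
    isOpen_lt hkcont continuous_const
  have hmem : θh ∈ {x : EuclideanSpace ℝ (Fin p) |
      Rstar (g ((M.orthogonalProjectionOnto x : EuclideanSpace ℝ (Fin p)))) < lam} := by
    simp only [Set.mem_setOf_eq, hPθh]; exact hdual
  obtain ⟨ε, hε, hball⟩ := Metric.isOpen_iff.mp hopen θh hmem
  have hlocal : ∀ x ∈ Metric.ball θh ε, x ≠ θh → F θh < F x := by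
    intro x hx hxne
    set α : EuclideanSpace ℝ (Fin p) := ↑(M.orthogonalProjectionOnto x) with hα
    set β : EuclideanSpace ℝ (Fin p) := x - α with hβ
    have hαM : α ∈ M := (M.orthogonalProjectionOnto x).2
    have hβM : β ∈ Mᗮ := Submodule.sub_starProjection_mem_orthogonal x
    have hxαβ : x = α + β := by rw [hβ]; abel
    by_cases hb0 : β = 0
    · have hxα : x = α := by rw [hxαβ, hb0, add_zero]
      rw [hxα]
      exact hstrictM α hαM (by rw [← hxα]; exact hxne)
    · have hRb : 0 < R β := hRpos β hβM hb0
      have hRs : Rstar (g α) < lam := hball hx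
      have hgrad : L α + ⟪g α, β⟫ ≤ L (α + β) := gradineq hL (hg α)
      have hip : |⟪β, g α⟫| ≤ R β * Rstar (g α) := hpair β hβM (g α)
      have hinner : -(R β * Rstar (g α)) ≤ ⟪g α, β⟫ := by
        rw [real_inner_comm]
        linarith [neg_abs_le (⟪β, g α⟫ : ℝ)]
      have hRadd' : R x = R α + R β := by rw [hxαβ]; exact hRadd α hαM β hβM
      have hminα := hmin α hαM
      simp only [hF]
      rw [hRadd', hxαβ]
      nlinarith [mul_pos hRb (sub_pos.mpr hRs)]
  -- globalization
  intro θ hθ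
  have hd0 : (0:ℝ) < ‖θ - θh‖ := by
    rw [norm_pos_iff]; exact sub_ne_zero.mpr hθ
  set t : ℝ := min (1/2 : ℝ) (ε / (2 * ‖θ - θh‖)) with ht
  have ht0 : 0 < t := lt_min (by norm_num) (by positivity)
  have ht1 : t < 1 := lt_of_le_of_lt (min_le_left _ _) (by norm_num)
  set θt : EuclideanSpace ℝ (Fin p) := θh + t • (θ - θh) with hθt
  have hθtball : θt ∈ Metric.ball θh ε := by
    rw [Metric.mem_ball, dist_eq_norm]
    have h1 : θt - θh = t • (θ - θh) := by rw [hθt]; abel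
    rw [h1, norm_smul, Real.norm_eq_abs, abs_of_pos ht0]
    have h2 : t ≤ ε / (2 * ‖θ - θh‖) := min_le_right _ _
    have h3 : t * ‖θ - θh‖ ≤ ε / 2 := by
      rw [le_div_iff₀ (by positivity : (0:ℝ) < 2 * ‖θ - θh‖)] at h2
      nlinarith
    linarith
  have hθtne : θt ≠ θh := by
    rw [hθt]
    intro hcon
    have : t • (θ - θh) = 0 := by
      have := congrArg (fun z => z - θh) hcon
      simpa using this
    exact (smul_ne_zero ht0.ne' (sub_ne_zero.mpr hθ)) this
  have hFc : ConvexOn ℝ Set.univ F := by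
    exact hL.add (hR.smul hlam)
  have hconvF : F θt ≤ (1 - t) * F θh + t * F θ := by
    have h1 := hFc.2 (Set.mem_univ θh) (Set.mem_univ θ)
      (show (0:ℝ) ≤ 1 - t by linarith) ht0.le (show 1 - t + t = 1 by ring)
    have h2 : (1 - t) • θh + t • θ = θt := by rw [hθt]; module
    rw [h2] at h1
    simpa using h1
  have h1 := hlocal θt hθtball hθtne
  have h2 : t * F θh < t * F θ := by nlinarith
  exact lt_of_mul_lt_mul_left h2 ht0.le
end
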